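/- Fourier attenuation factorization for the stroke operator: let u ∈ H_ℂ be the aligned Fourier mode u[n₁,n₂] = exp(i(ω₁·n₁ + ω₂·n₂)) for real frequencies ω₁, ω₂, neither of which is an integer multiple of 2π. Then ‖u‖₂² = (m·k)·(n·k), ‖S_k u‖₂² = (m·k)·(n·k)·γ_k(ω₁)²·γ_k(ω₂)², and hence the retention ratio satisfies ‖S_k u‖₂ / ‖u‖₂ = γ_k(ω₁)·γ_k(ω₂), where γ_k(ω) := |sin(kω/2)/(k·sin(ω/2))|. -/

import Mathlib

open scoped BigOperators

namespace Stroke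

/-- The space of complex `(m·k) × (n·k)` matrices, as functions on index pairs. -/
abbrev HC (m n k : ℕ) : Type := Fin (m * k) → Fin (n * k) → ℂ

/-- The grid index `(i/k)·k + r`, i.e. the `r`-th index inside the block containing `i`. -/
def blk (d k : ℕ) (i : Fin (d * k)) (r : Fin k) : Fin (d * k) :=
  ⟨i.val / k * k + r.val, by
    have hk : 0 < k := r.pos
    have h1 : i.val / k < d := (Nat.div_lt_iff_lt_mul hk).mpr i.isLt
    calc i.val / k * k + r.val < i.val / k * k + k := Nat.add_lt_add_left r.isLt _
      _ = (i.val / k + 1) * k := by ring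
      _ ≤ d * k := Nat.mul_le_mul (Nat.succ_le_of_lt h1) le_rfl⟩

/-- The stroke operator `S_k` on complex matrices: each entry of a `k × k` block is
replaced by the block average. -/
noncomputable def S {m n k : ℕ} (x : HC m n k) : HC m n k :=
  fun i j => (1 / (k : ℂ) ^ 2) *
    ∑ r1 : Fin k, ∑ r2 : Fin k, x (blk m k i r1) (blk n k j r2)

/-- The squared Hermitian norm `‖x‖₂² = ∑_{n₁,n₂} |x[n₁,n₂]|²`. -/
noncomputable def nsq {m n k : ℕ} (x : HC m n k) : ℝ :=
  ∑ i, ∑ j, ‖x i j‖ ^ 2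

/-- The 1D attenuation factor `γ_k(ω) = |sin(kω/2)/(k·sin(ω/2))|`. -/
noncomputable def gam (k : ℕ) (ω : ℝ) : ℝ :=
  |Real.sin (k * ω / 2) / (k * Real.sin (ω / 2))|

/-- The aligned Fourier mode `u[n₁,n₂] = exp(i(ω₁·n₁ + ω₂·n₂))`. -/
noncomputable def mode (m n k : ℕ) (ω₁ ω₂ : ℝ) : HC m n k :=
  fun n₁ n₂ => Complex.exp (Complex.I * ((ω₁ : ℂ) * (n₁.val : ℂ) + (ω₂ : ℂ) * (n₂.val : ℂ)))

theorem abs_exp_sub_one (θ : ℝ) :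
    ‖Complex.exp (Complex.I * θ) - 1‖ = 2 * |Real.sin (θ/2)| := by
  have h : Complex.exp (Complex.I * θ) - 1
      = Complex.exp (Complex.I * (θ/2:ℝ)) *
        (Complex.exp (((θ/2:ℝ):ℂ) * Complex.I) - Complex.exp (-(((θ/2:ℝ):ℂ) * Complex.I))) := by
    rw [mul_sub, ← Complex.exp_add, ← Complex.exp_add]
    push_cast
    ring_nf
    simp [Complex.exp_zero]
    ring
  have h2 : Complex.exp (((θ/2:ℝ):ℂ) * Complex.I) - Complex.exp (-(((θ/2:ℝ):ℂ) * Complex.I))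
      = 2 * Complex.sin ((θ/2:ℝ):ℂ) * Complex.I := by
    rw [show -(((θ/2:ℝ):ℂ) * Complex.I) = (-((θ/2:ℝ):ℂ)) * Complex.I by ring,
      Complex.exp_mul_I, Complex.exp_mul_I, Complex.cos_neg, Complex.sin_neg]
    ring
  rw [h, h2, norm_mul]
  rw [show Complex.I * ((θ/2:ℝ):ℂ) = ((θ/2:ℝ):ℂ) * Complex.I by ring,
    Complex.norm_exp_ofReal_mul_I, one_mul]
  rw [← Complex.ofReal_sin]
  simp [norm_mul, Complex.norm_real]
  rw [show ((θ:ℂ)/2) = ((θ/2:ℝ):ℂ) by push_cast; ring]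
  rw [← Complex.ofReal_sin, Complex.norm_real, Real.norm_eq_abs]

theorem abs_dirichlet (k : ℕ) {ω : ℝ} (hs : Real.sin (ω/2) ≠ 0) :
    ‖∑ r : Fin k, Complex.exp (Complex.I * ω * r)‖ =
      |Real.sin (k * ω / 2)| / |Real.sin (ω / 2)| := by
  have hw : Complex.exp (Complex.I * ω) ≠ 1 := by
    intro h
    have := abs_exp_sub_one ω
    rw [h] at this
    simp at this
    exact hs this
  have hterm : ∀ r : ℕ, Complex.exp (Complex.I * ω * r) = Complex.exp (Complex.I * ω) ^ r := by
    intro r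
    rw [← Complex.exp_nat_mul]
    ring_nf
  have hsum : (∑ r : Fin k, Complex.exp (Complex.I * ω * r))
      = (Complex.exp (Complex.I * ω) ^ k - 1) / (Complex.exp (Complex.I * ω) - 1) := by
    rw [Fin.sum_univ_eq_sum_range (fun r => Complex.exp (Complex.I * ω * r))]
    rw [← geom_sum_eq hw]
    exact Finset.sum_congr rfl fun r _ => hterm r
  rw [hsum, norm_div]
  rw [← Complex.exp_nat_mul, show (k:ℂ) * (Complex.I * ω) = Complex.I * ((k*ω : ℝ):ℂ) by push_cast; ring]
  rw [abs_exp_sub_one, abs_exp_sub_one]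
  rw [show (k*ω)/2 = k*ω/2 by ring]
  have h2 : (2:ℝ) * |Real.sin (ω/2)| ≠ 0 := by positivity
  field_simp

theorem sin_half_ne_zero {ω : ℝ} (hω : ∀ ℓ : ℤ, ω ≠ 2 * Real.pi * ℓ) :
    Real.sin (ω/2) ≠ 0 := by
  intro h
  rcases Real.sin_eq_zero_iff.mp h with ⟨ℓ, hℓ⟩
  exact hω ℓ (by linarith)

theorem mode_abs {m n k : ℕ} (ω₁ ω₂ : ℝ) (i : Fin (m*k)) (j : Fin (n*k)) :
    ‖mode m n k ω₁ ω₂ i j‖ = 1 := by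
  unfold mode
  rw [show (Complex.I * ((ω₁ : ℂ) * (i.val : ℂ) + (ω₂ : ℂ) * (j.val : ℂ)))
      = ((ω₁ * i.val + ω₂ * j.val : ℝ) : ℂ) * Complex.I by push_cast; ring]
  exact Complex.norm_exp_ofReal_mul_I _

theorem S_mode_abs {m n k : ℕ} (hk : 0 < k) {ω₁ ω₂ : ℝ}
    (h₁ : Real.sin (ω₁/2) ≠ 0) (h₂ : Real.sin (ω₂/2) ≠ 0)
    (i : Fin (m*k)) (j : Fin (n*k)) :
    ‖S (mode m n k ω₁ ω₂) i j‖ = gam k ω₁ * gam k ω₂ := by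
  have hfac : (∑ r1 : Fin k, ∑ r2 : Fin k,
        mode m n k ω₁ ω₂ (blk m k i r1) (blk n k j r2))
      = Complex.exp (Complex.I * ((ω₁:ℂ) * (i.val/k*k : ℕ) + (ω₂:ℂ) * (j.val/k*k : ℕ))) *
        ((∑ r1 : Fin k, Complex.exp (Complex.I * ω₁ * r1)) *
         (∑ r2 : Fin k, Complex.exp (Complex.I * ω₂ * r2))) := by
    rw [Finset.sum_mul_sum, Finset.mul_sum]
    refine Finset.sum_congr rfl fun r1 _ => ?_
    rw [Finset.mul_sum]
    refine Finset.sum_congr rfl fun r2 _ => ?_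
    unfold mode blk
    rw [← Complex.exp_add, ← Complex.exp_add]
    congr 1
    push_cast
    ring
  unfold S
  rw [hfac, norm_mul, norm_mul, norm_mul]
  rw [show (Complex.I * ((ω₁:ℂ) * (i.val/k*k : ℕ) + (ω₂:ℂ) * (j.val/k*k : ℕ)))
      = ((ω₁ * (i.val/k*k : ℕ) + ω₂ * (j.val/k*k : ℕ) : ℝ) : ℂ) * Complex.I by push_cast; ring]
  rw [Complex.norm_exp_ofReal_mul_I]
  rw [abs_dirichlet k h₁, abs_dirichlet k h₂]
  have hk' : (k:ℝ) ≠ 0 := Nat.cast_ne_zero.mpr hk.ne'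
  have habs : ‖1 / (k:ℂ)^2‖ = 1 / (k:ℝ)^2 := by
    rw [norm_div, norm_one, norm_pow, Complex.norm_natCast]
  rw [habs]
  unfold gam
  rw [abs_div, abs_div, abs_mul, abs_mul, Nat.abs_cast]
  have hb : |Real.sin (ω₁/2)| ≠ 0 := abs_ne_zero.mpr h₁
  have hd : |Real.sin (ω₂/2)| ≠ 0 := abs_ne_zero.mpr h₂
  field_simp


/-- Fourier attenuation factorization for the stroke operator: for an
aligned Fourier mode `u` with frequencies `ω₁, ω₂` not integer multiples of `2π`,
`‖u‖₂² = (m·k)·(n·k)`, `‖S_k u‖₂² = (m·k)·(n·k)·γ_k(ω₁)²·γ_k(ω₂)²`, and the retention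
ratio satisfies `‖S_k u‖₂ / ‖u‖₂ = γ_k(ω₁)·γ_k(ω₂)`. -/
theorem stroke_fourier_attenuation {m n k : ℕ}
    (hm : 0 < m) (hn : 0 < n) (hk : 0 < k) (ω₁ ω₂ : ℝ)
    (hω₁ : ∀ ℓ : ℤ, ω₁ ≠ 2 * Real.pi * ℓ) (hω₂ : ∀ ℓ : ℤ, ω₂ ≠ 2 * Real.pi * ℓ) :
    nsq (mode m n k ω₁ ω₂) = ((m * k : ℕ) : ℝ) * ((n * k : ℕ) : ℝ) ∧
    nsq (S (mode m n k ω₁ ω₂))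
      = ((m * k : ℕ) : ℝ) * ((n * k : ℕ) : ℝ) * gam k ω₁ ^ 2 * gam k ω₂ ^ 2 ∧
    Real.sqrt (nsq (S (mode m n k ω₁ ω₂))) / Real.sqrt (nsq (mode m n k ω₁ ω₂))
      = gam k ω₁ * gam k ω₂ := by
  have h₁ := sin_half_ne_zero hω₁
  have h₂ := sin_half_ne_zero hω₂
  have e1 : nsq (mode m n k ω₁ ω₂) = ((m * k : ℕ) : ℝ) * ((n * k : ℕ) : ℝ) := by
    unfold nsq
    simp [mode_abs]
  have e2 : nsq (S (mode m n k ω₁ ω₂))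
      = ((m * k : ℕ) : ℝ) * ((n * k : ℕ) : ℝ) * gam k ω₁ ^ 2 * gam k ω₂ ^ 2 := by
    unfold nsq
    have : ∀ (i : Fin (m*k)) (j : Fin (n*k)),
        ‖S (mode m n k ω₁ ω₂) i j‖ ^ 2 = gam k ω₁ ^ 2 * gam k ω₂ ^ 2 := by
      intro i j
      rw [S_mode_abs hk h₁ h₂]
      ring
    simp only [this, Finset.sum_const, Finset.card_univ, Fintype.card_fin, nsmul_eq_mul]
    ring
  refine ⟨e1, e2, ?_⟩
  rw [e1, e2]
  have hg1 : 0 ≤ gam k ω₁ := abs_nonneg _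
  have hg2 : 0 ≤ gam k ω₂ := abs_nonneg _
  have hA : (0:ℝ) < ((m * k : ℕ) : ℝ) * ((n * k : ℕ) : ℝ) := by
    have := Nat.mul_pos hm hk
    have := Nat.mul_pos hn hk
    positivity
  rw [show ((m * k : ℕ) : ℝ) * ((n * k : ℕ) : ℝ) * gam k ω₁ ^ 2 * gam k ω₂ ^ 2
      = (((m * k : ℕ) : ℝ) * ((n * k : ℕ) : ℝ)) * (gam k ω₁ * gam k ω₂) ^ 2 by ring]
  rw [Real.sqrt_mul hA.le, Real.sqrt_sq (by positivity)]
  rw [mul_comm, mul_div_assoc, div_self (Real.sqrt_ne_zero'.mpr hA), mul_one]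

end Stroke
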